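/- Let K be a topological group with identity 1, let n ≥ 1, and let G be a subgroup of the symmetric group Σ_n of the form H × {1} where H is a subgroup of Σ_{n-1} (i.e. every permutation in G fixes the last coordinate). Then the ordered configuration space quotient F_n^G(K) = F_n(K)/G is homeomorphic to the product F_{n-1}^H(K \ {1}) × K, where F_n(X) denotes the space of n-tuples of pairwise distinct points of X and the quotient is by the permutation action on coordinates. -/

import Mathlib

/-- The ordered configuration space of `n`-tuples of pairwise distinct points of `X`. -/
abbrev Config (X : Type*) [TopologicalSpace X] (n : ℕ) : Type _ :=
  {f : Fin n → X // Function.Injective f}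

/-- The equivalence relation on `Config X n` whose classes are the orbits of the
coordinate-permutation action of a subgroup `G ≤ Σ_n`; its quotient is `F_n^G(X)`. -/
def configSetoid (X : Type*) [TopologicalSpace X] (n : ℕ)
    (G : Subgroup (Equiv.Perm (Fin n))) : Setoid (Config X n) where
  r f g := ∃ σ ∈ G, (f : Fin n → X) = (g : Fin n → X) ∘ σ
  iseqv := by
    constructor
    · exact fun f => ⟨1, G.one_mem, rfl⟩
    · rintro f g ⟨σ, hσ, h⟩
      refine ⟨σ⁻¹, G.inv_mem hσ, funext fun i => ?_⟩
      simp [h, Function.comp]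
    · rintro f g k ⟨σ, hσ, h1⟩ ⟨τ, hτ, h2⟩
      refine ⟨τ * σ, G.mul_mem hτ hσ, funext fun i => ?_⟩
      simp [h1, h2, Function.comp, Equiv.Perm.mul_apply]

/-- `Fin n` is equivalent to the set of elements of `Fin (n+1)` different from the last one. -/
def lastEquiv (n : ℕ) : Fin n ≃ {i : Fin (n + 1) // i ≠ Fin.last n} where
  toFun i := ⟨i.castSucc, Fin.ne_of_lt (Fin.castSucc_lt_last i)⟩
  invFun i := i.1.castPred i.2
  left_inv i := by simp
  right_inv i := by simp

section Aux

variable {X : Type*} [TopologicalSpace X] {n : ℕ}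

/-- Precomposition with a permutation, as a homeomorphism of the configuration space. -/
def precompHomeo (σ : Equiv.Perm (Fin n)) : Config X n ≃ₜ Config X n where
  toFun f := ⟨f.1 ∘ σ, f.2.comp σ.injective⟩
  invFun f := ⟨f.1 ∘ ⇑σ⁻¹, f.2.comp (σ⁻¹ : Equiv.Perm (Fin n)).injective⟩
  left_inv f := Subtype.ext (funext fun i => by simp)
  right_inv f := Subtype.ext (funext fun i => by simp)
  continuous_toFun := by
    refine Continuous.subtype_mk (continuous_pi fun i => ?_) _
    exact (continuous_apply (σ i)).comp continuous_subtype_val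
  continuous_invFun := by
    refine Continuous.subtype_mk (continuous_pi fun i => ?_) _
    exact (continuous_apply (σ⁻¹ i)).comp continuous_subtype_val

theorem isOpenMap_configMk (G : Subgroup (Equiv.Perm (Fin n))) :
    IsOpenMap (Quotient.mk (configSetoid X n G)) := by
  letI : Setoid (Config X n) := configSetoid X n G
  intro U hU
  rw [← isQuotientMap_quotient_mk'.isOpen_preimage]
  have : Quotient.mk' ⁻¹' (Quotient.mk (configSetoid X n G) '' U)
      = ⋃ σ ∈ G, (precompHomeo (X := X) σ) '' U := by
    ext f
    simp only [Set.mem_preimage, Set.mem_image, Set.mem_iUnion]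
    constructor
    · rintro ⟨g, hg, hfg⟩
      obtain ⟨σ, hσ, h⟩ := Quotient.exact (hfg.symm)
      exact ⟨σ, hσ, g, hg, Subtype.ext (by exact h.symm)⟩
    · rintro ⟨σ, hσ, g, hg, rfl⟩
      exact ⟨g, hg, Quotient.sound (Setoid.symm
        ⟨σ, hσ, by exact rfl⟩)⟩
  rw [this]
  exact isOpen_iUnion fun σ => isOpen_iUnion fun _ => (precompHomeo σ).isOpenMap U hU

end Aux

section Split

variable {K : Type*} [TopologicalSpace K] [Group K] [IsTopologicalGroup K] {n : ℕ}

/-- The splitting homeomorphism `F_{n+1}(K) ≅ F_n(K \ {1}) × K`. -/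
def splitEquiv : Config K (n + 1) ≃ₜ Config {x : K // x ≠ 1} n × K where
  toFun f := (⟨fun i => ⟨f.1 i.castSucc * (f.1 (Fin.last n))⁻¹, by
      simp only [ne_eq, mul_inv_eq_one]
      exact fun h => (Fin.castSucc_lt_last i).ne (f.2 h)⟩, by
      intro i j h
      have := congrArg Subtype.val h
      simp only [mul_left_inj] at this
      exact Fin.castSucc_injective n (f.2 this)⟩, f.1 (Fin.last n))
  invFun p := ⟨Fin.snoc (fun j => (p.1.1 j : K) * p.2) p.2, by
      intro i j h
      induction i using Fin.lastCases with
      | last =>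
        induction j using Fin.lastCases with
        | last => rfl
        | cast j =>
          simp only [Fin.snoc_last, Fin.snoc_castSucc] at h
          exact absurd (mul_eq_right.mp h.symm) (p.1.1 j).2
      | cast i =>
        induction j using Fin.lastCases with
        | last =>
          simp only [Fin.snoc_last, Fin.snoc_castSucc] at h
          exact absurd (mul_eq_right.mp h) (p.1.1 i).2
        | cast j =>
          simp only [Fin.snoc_castSucc, mul_left_inj] at h
          exact congrArg Fin.castSucc (p.1.2 (Subtype.ext h))⟩
  left_inv f := by
    ext i
    induction i using Fin.lastCases with
    | last => simp
    | cast i => simp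
  right_inv p := by
    refine Prod.ext (Subtype.ext (funext fun j => Subtype.ext ?_)) (by simp)
    simp
  continuous_toFun := by
    refine Continuous.prodMk (Continuous.subtype_mk (continuous_pi fun i =>
      Continuous.subtype_mk ?_ _) _) ((continuous_apply _).comp continuous_subtype_val)
    exact ((continuous_apply _).comp continuous_subtype_val).mul
      (((continuous_apply _).comp continuous_subtype_val).inv)
  continuous_invFun := by
    refine Continuous.subtype_mk (continuous_pi fun i => ?_) _
    induction i using Fin.lastCases with
    | last => simpa using continuous_snd
    | cast i =>
      simp only [Fin.snoc_castSucc]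
      exact (continuous_subtype_val.comp ((continuous_apply i).comp
        (continuous_subtype_val.comp continuous_fst))).mul continuous_snd

theorem extend_last (τ : Equiv.Perm (Fin n)) :
    τ.extendDomain (lastEquiv n) (Fin.last n) = Fin.last n :=
  Equiv.Perm.extendDomain_apply_not_subtype _ _ (by simp)

theorem extend_castSucc (τ : Equiv.Perm (Fin n)) (j : Fin n) :
    τ.extendDomain (lastEquiv n) j.castSucc = (τ j).castSucc :=
  Equiv.Perm.extendDomain_apply_image _ _ _

theorem split_equivariant (H : Subgroup (Equiv.Perm (Fin n)))
    (G : Subgroup (Equiv.Perm (Fin (n + 1))))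
    (hGH : G = H.map (Equiv.Perm.extendDomainHom (lastEquiv n)))
    (f g : Config K (n + 1)) :
    (configSetoid K (n + 1) G).r f g ↔
      (configSetoid {x : K // x ≠ 1} n H).r (splitEquiv f).1 (splitEquiv g).1 ∧
        (splitEquiv f).2 = (splitEquiv g).2 := by
  subst hGH
  constructor
  · rintro ⟨σ, hσ, h⟩
    obtain ⟨τ, hτ, rfl⟩ := Subgroup.mem_map.mp hσ
    have hlast : f.1 (Fin.last n) = g.1 (Fin.last n) := by
      have := congrFun h (Fin.last n)
      simpa [Function.comp, Equiv.Perm.extendDomainHom_apply, extend_last] using this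
    refine ⟨⟨τ, hτ, funext fun j => Subtype.ext ?_⟩, hlast⟩
    show f.1 j.castSucc * (f.1 (Fin.last n))⁻¹ = g.1 (τ j).castSucc * (g.1 (Fin.last n))⁻¹
    have hj := congrFun h j.castSucc
    simp only [Function.comp, Equiv.Perm.extendDomainHom_apply, extend_castSucc] at hj
    rw [hj, hlast]
  · rintro ⟨⟨τ, hτ, h1⟩, h2⟩
    refine ⟨Equiv.Perm.extendDomainHom (lastEquiv n) τ, Subgroup.mem_map.mpr ⟨τ, hτ, rfl⟩,
      funext fun i => ?_⟩
    simp only [Equiv.Perm.extendDomainHom_apply, Function.comp]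
    induction i using Fin.lastCases with
    | last => rw [extend_last]; exact h2
    | cast j =>
      rw [extend_castSucc]
      have e1 : f.1 j.castSucc * (f.1 (Fin.last n))⁻¹
          = g.1 (τ j).castSucc * (g.1 (Fin.last n))⁻¹ :=
        congrArg Subtype.val (congrFun h1 j)
      have h2' : f.1 (Fin.last n) = g.1 (Fin.last n) := h2
      have := congrArg (· * f.1 (Fin.last n)) e1
      simpa [mul_assoc, h2'] using this

end Split

/-- If `G ≤ Σ_{n+1}` is of the form `H × {1}` with `H ≤ Σ_n` (every permutation in `G` fixes
the last coordinate), then `F_{n+1}^G(K) ≅ F_n^H(K \ {1}) × K` for a topological group `K`. -/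
theorem stmt_0 (K : Type*) [TopologicalSpace K] [Group K] [IsTopologicalGroup K]
    (n : ℕ) (H : Subgroup (Equiv.Perm (Fin n))) (G : Subgroup (Equiv.Perm (Fin (n + 1))))
    (hGH : G = H.map (Equiv.Perm.extendDomainHom (lastEquiv n))) :
    Nonempty (Quotient (configSetoid K (n + 1) G) ≃ₜ
      Quotient (configSetoid {x : K // x ≠ 1} n H) × K) := by
  set sG := configSetoid K (n + 1) G
  set sH := configSetoid {x : K // x ≠ 1} n H
  set e : Config K (n + 1) ≃ₜ Config {x : K // x ≠ 1} n × K := splitEquiv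
  have hresp : ∀ a b : Config K (n + 1), sG.r a b →
      (Quotient.mk sH (e a).1, (e a).2) = (Quotient.mk sH (e b).1, (e b).2) := by
    intro a b hab
    obtain ⟨h1, h2⟩ := (split_equivariant H G hGH a b).mp hab
    exact Prod.ext (Quotient.sound h1) h2
  let Φ : Quotient sG ≃ Quotient sH × K :=
    { toFun := Quotient.lift (fun f => (Quotient.mk sH (e f).1, (e f).2)) hresp
      invFun := fun p => Quotient.lift
        (fun g => Quotient.mk sG (e.symm (g, p.2)))
        (fun a b hab => Quotient.sound <| (split_equivariant H G hGH _ _).mpr <| by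
          rw [e.apply_symm_apply, e.apply_symm_apply]
          exact ⟨hab, rfl⟩) p.1
      left_inv := by
        refine Quotient.ind fun f => ?_
        simp only [Quotient.lift_mk]
        show Quotient.mk sG (e.symm ((e f).1, (e f).2)) = _
        rw [show ((e f).1, (e f).2) = e f from rfl, e.symm_apply_apply]
      right_inv := by
        rintro ⟨q, k⟩
        induction q using Quotient.ind with
        | _ g =>
          simp only [Quotient.lift_mk]
          rw [e.apply_symm_apply] }
  have hcont : Continuous Φ := by
    refine Continuous.quotient_lift ?_ hresp
    exact Continuous.prodMk (continuous_quotient_mk'.comp (continuous_fst.comp e.continuous))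
      (continuous_snd.comp e.continuous)
  have hopen : IsOpenMap Φ := by
    intro U hU
    have hsurj : Quotient.mk sG '' (Quotient.mk sG ⁻¹' U) = U :=
      Set.image_preimage_eq U (Quotient.mk'_surjective)
    have key : ∀ V : Set (Config K (n + 1)), Φ '' (Quotient.mk sG '' V)
        = (fun p : Config {x : K // x ≠ 1} n × K => (Quotient.mk sH p.1, p.2)) '' (e '' V) := by
      intro V
      rw [← Set.image_comp, ← Set.image_comp]
      rfl
    rw [← hsurj, key]
    exact ((isOpenMap_configMk H).prodMap IsOpenMap.id) _
      (e.isOpenMap _ ((continuous_quotient_mk').isOpen_preimage U hU))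
  exact ⟨Equiv.toHomeomorphOfContinuousOpen Φ hcont hopen⟩
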